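/- Fix η ∈ ℂ. Define φ₁ : {(q₁,q₂,p₁,p₂) ∈ ℂ⁴ : q₁ ≠ 0} → ℂ⁴ by φ₁(q₁,q₂,p₁,p₂) = (1/q₁, q₂/q₁, −q₁(q₁p₁+q₂p₂+η), q₁p₂). Let Ω be the 4×4 complex matrix with entries Ω₁₃ = Ω₂₄ = 1, Ω₃₁ = Ω₄₂ = −1 and all other entries 0. Then φ₁ is a symplectic transformation: at every point v of its domain, φ₁ is complex-differentiable and the 4×4 matrix J of its derivative (with respect to the standard coordinates, ordered (q₁,q₂,p₁,p₂) in the source and as the four listed components in the target) satisfies Jᵀ·Ω·J = Ω. -/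

import Mathlib

set_option maxHeartbeats 1000000

/-- The coordinate change `φ₁` from the chart `W₀₀` to the chart `W₁₀` of the
compactified phase space of the fourth-order FST Painlevé system,
`φ₁(q₁,q₂,p₁,p₂) = (1/q₁, q₂/q₁, −q₁(q₁p₁+q₂p₂+η), q₁p₂)`, is a symplectic
transformation: at every point of its domain `{q₁ ≠ 0}` it is complex-differentiable
and its Jacobian matrix `J` satisfies `Jᵀ Ω J = Ω`, where `Ω` is the matrix of the
canonical symplectic form (coordinates ordered `(q₁,q₂,p₁,p₂)`). -/
theorem phi1_symplectic (η : ℂ) (v : Fin 4 → ℂ) (hv : v 0 ≠ 0) :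
    ∃ J : Matrix (Fin 4) (Fin 4) ℂ,
      HasFDerivAt
        (fun w : Fin 4 → ℂ =>
          (![1 / w 0, w 1 / w 0, -w 0 * (w 0 * w 2 + w 1 * w 3 + η), w 0 * w 3] :
            Fin 4 → ℂ))
        (LinearMap.toContinuousLinearMap (Matrix.mulVecLin J)) v ∧
      J.transpose * (!![0, 0, 1, 0; 0, 0, 0, 1; -1, 0, 0, 0; 0, -1, 0, 0] :
          Matrix (Fin 4) (Fin 4) ℂ) * J =
        !![0, 0, 1, 0; 0, 0, 0, 1; -1, 0, 0, 0; 0, -1, 0, 0] := by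
  have hp : ∀ j : Fin 4, HasFDerivAt (fun w : Fin 4 → ℂ => w j)
      (ContinuousLinearMap.proj j : (Fin 4 → ℂ) →L[ℂ] ℂ) v :=
    fun j => hasFDerivAt_apply j v
  have hinv : HasFDerivAt (fun w : Fin 4 → ℂ => (w 0)⁻¹)
      ((-((v 0)^2)⁻¹) • (ContinuousLinearMap.proj 0 : (Fin 4 → ℂ) →L[ℂ] ℂ)) v :=
    (hasDerivAt_inv hv).comp_hasFDerivAt v (hp 0)
  refine ⟨!![-1 / (v 0)^2, 0, 0, 0;
             -(v 1) / (v 0)^2, 1 / v 0, 0, 0;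
             -(2 * v 0 * v 2 + v 1 * v 3 + η), -(v 0) * v 3, -(v 0)^2, -(v 0) * v 1;
             v 3, 0, 0, v 0], ?_, ?_⟩
  · rw [hasFDerivAt_pi']
    intro i
    fin_cases i <;>
      simp only [Matrix.cons_val_zero, Matrix.cons_val_one, Matrix.head_cons,
        Matrix.cons_val_two, Matrix.tail_cons, Matrix.cons_val_three, Fin.mk_zero,
        Fin.mk_one]
    · simp only [one_div]
      refine hinv.congr_fderiv ?_
      ext u
      simp [Matrix.mulVecLin_apply, Matrix.mulVec, dotProduct,
        Fin.sum_univ_four, Matrix.vecHead, Matrix.vecTail]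
      field_simp
    · simp only [div_eq_mul_inv]
      refine ((hp 1).mul hinv).congr_fderiv ?_
      ext u
      simp [Matrix.mulVecLin_apply, Matrix.mulVec, dotProduct,
        Fin.sum_univ_four, Matrix.vecHead, Matrix.vecTail]
      field_simp
      try ring
    · have h := ((hp 0).neg.mul ((((hp 0).mul (hp 2)).add ((hp 1).mul (hp 3))).add_const η))
      refine h.congr_fderiv ?_
      ext u
      simp [Matrix.mulVecLin_apply, Matrix.mulVec, dotProduct,
        Fin.sum_univ_four, Matrix.vecHead, Matrix.vecTail]
      ring
    · refine ((hp 0).mul (hp 3)).congr_fderiv ?_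
      ext u
      simp [Matrix.mulVecLin_apply, Matrix.mulVec, dotProduct,
        Fin.sum_univ_four, Matrix.vecHead, Matrix.vecTail]
      ring
  · ext i j
    fin_cases i <;> fin_cases j <;>
      · simp only [Matrix.mul_apply, Matrix.transpose_apply, Fin.sum_univ_four,
          Matrix.cons_val', Matrix.cons_val_zero, Matrix.cons_val_one, Matrix.head_cons,
          Matrix.cons_val_two, Matrix.tail_cons, Matrix.cons_val_three,
          Matrix.empty_val', Matrix.cons_val_fin_one, Matrix.head_fin_const,
          Matrix.of_apply, Fin.isValue, Fin.zero_eta, Fin.mk_one, Fin.reduceFinMk,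
          Matrix.cons_val]
        field_simp
        try ring
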